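/- The service rate region S_i(n,k) contains the maximal achievable simplex: the convex hull of the origin together with the k points λ_j^max·e_j (j = 1,…,k) is contained in S_i(n,k), where λ_j^max equals 1 + (n−1)/k if j ≤ i and n ≥ k+1, equals 1 if j ≤ i and n = k, and equals n/k if j > i, and e_j denotes the j-th standard basis vector of R^k. -/

import Mathlib

open Matrix

/-- `R ⊆ [n]` is a recovery set for object `j` under generator matrix `G`:
the standard basis vector `e_j` lies in the span of the columns of `G` indexed by `R`,
and minimally so. -/
def IsRecoverySet {F : Type*} [Field F] {k n : ℕ} (G : Matrix (Fin k) (Fin n) F)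
    (j : Fin k) (R : Finset (Fin n)) : Prop :=
  (Pi.single j 1 : Fin k → F) ∈ Submodule.span F (Gᵀ '' (R : Set (Fin n))) ∧
    ∀ S : Finset (Fin n), S ⊂ R →
      (Pi.single j 1 : Fin k → F) ∉ Submodule.span F (Gᵀ '' (S : Set (Fin n)))

/-- A valid allocation of request rates `lam` to recovery sets: nonnegative weights
`w j R` supported on recovery sets, summing to `lam j` for each object `j`, and
loading each server `l` by at most its unit capacity. -/
def IsValidAllocation {F : Type*} [Field F] {k n : ℕ} (G : Matrix (Fin k) (Fin n) F)
    (lam : Fin k → ℝ) (w : Fin k → Finset (Fin n) → ℝ) : Prop :=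
  (∀ j R, 0 ≤ w j R) ∧
  (∀ j R, ¬ IsRecoverySet G j R → w j R = 0) ∧
  (∀ j, ∑ R : Finset (Fin n), w j R = lam j) ∧
  (∀ l : Fin n, ∑ j : Fin k, ∑ R ∈ Finset.univ.filter (fun R : Finset (Fin n) => l ∈ R),
      w j R ≤ 1)

/-- The service rate region of `G`. -/
def ServiceRegion {F : Type*} [Field F] {k n : ℕ} (G : Matrix (Fin k) (Fin n) F) :
    Set (Fin k → ℝ) :=
  {lam | (∀ j, 0 ≤ lam j) ∧ ∃ w, IsValidAllocation G lam w}

/-- `Gmat M i` = the `k × n` matrix formed by the `i` leftmost (systematic) columns of `M`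
followed by the `n - i` rightmost (parity) columns of `M`. -/
def Gmat {F : Type*} [Field F] {k n : ℕ} (M : Matrix (Fin k) (Fin (k + n)) F) (i : ℕ) :
    Matrix (Fin k) (Fin n) F :=
  Matrix.of fun r l =>
    if (l : ℕ) < i then M r ⟨(l : ℕ), by have := l.isLt; omega⟩
    else M r ⟨k + (l : ℕ), by have := l.isLt; omega⟩

section Aux

variable {F : Type*} [Field F] {k n : ℕ}

def cmap (k : ℕ) {n : ℕ} (i : ℕ) (l : Fin n) : Fin (k + n) :=
  if (l : ℕ) < i then ⟨(l : ℕ), by have := l.isLt; omega⟩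
  else ⟨k + (l : ℕ), by have := l.isLt; omega⟩

lemma cmap_val (i : ℕ) (l : Fin n) :
    (cmap k i l : ℕ) = if (l : ℕ) < i then (l : ℕ) else k + (l : ℕ) := by
  unfold cmap; split_ifs <;> rfl

lemma cmap_inj {i : ℕ} (hik : i ≤ k) : Function.Injective (cmap k (n := n) i) := by
  intro a b h
  have hv : (cmap k i a : ℕ) = (cmap k i b : ℕ) := by rw [h]
  rw [cmap_val, cmap_val] at hv
  split_ifs at hv <;> (exact Fin.ext (by omega))

lemma Gmat_transpose (M : Matrix (Fin k) (Fin (k + n)) F) (i : ℕ) (l : Fin n) :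
    (Gmat M i)ᵀ l = Mᵀ (cmap k i l) := by
  funext r
  simp only [transpose_apply, Gmat, cmap, of_apply]
  split_ifs <;> rfl

lemma Gmat_image (M : Matrix (Fin k) (Fin (k + n)) F) (i : ℕ) (S : Finset (Fin n)) :
    (Gmat M i)ᵀ '' (S : Set (Fin n)) =
      Mᵀ '' ((S.image (cmap k i) : Finset (Fin (k+n))) : Set (Fin (k+n))) := by
  rw [Finset.coe_image]
  ext x
  constructor
  · rintro ⟨l, hl, rfl⟩
    exact ⟨cmap k i l, ⟨l, hl, rfl⟩, (Gmat_transpose M i l).symm⟩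
  · rintro ⟨_, ⟨l, hl, rfl⟩, rfl⟩
    exact ⟨l, hl, Gmat_transpose M i l⟩

lemma liM (M : Matrix (Fin k) (Fin (k + n)) F)
    (hMDS : ∀ S : Finset (Fin (k + n)), S.card = k →
      LinearIndependent F (fun l : S => Mᵀ (l : Fin (k + n))))
    (T : Finset (Fin (k + n))) (hT : T.card ≤ k) :
    LinearIndependent F (fun l : (T : Set (Fin (k+n))) => Mᵀ l.1) := by
  obtain ⟨T', hsub, hcard⟩ := Finset.exists_superset_card_eq hT
    (by simp only [Fintype.card_fin]; omega)
  exact (hMDS T' hcard).comp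
    (fun x : (T : Set (Fin (k+n))) => (⟨x.1, hsub (Finset.mem_coe.mp x.2)⟩ : {y // y ∈ T'}))
    (fun a b h => Subtype.ext (by have h' := congrArg Subtype.val h; exact h'))

lemma single_eq_col (M : Matrix (Fin k) (Fin (k + n)) F)
    (hsys : ∀ j : Fin k, ∀ r : Fin k, M r (Fin.castAdd n j) = if r = j then (1 : F) else 0)
    (j : Fin k) : (Pi.single j 1 : Fin k → F) = Mᵀ (Fin.castAdd n j) := by
  funext r
  rw [transpose_apply, hsys j r, Pi.single_apply]

lemma not_mem_span_of_small (M : Matrix (Fin k) (Fin (k + n)) F)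
    (hsys : ∀ j : Fin k, ∀ r : Fin k, M r (Fin.castAdd n j) = if r = j then (1 : F) else 0)
    (hMDS : ∀ S : Finset (Fin (k + n)), S.card = k →
      LinearIndependent F (fun l : S => Mᵀ (l : Fin (k + n))))
    (j : Fin k) (T : Finset (Fin (k + n))) (hT : T.card + 1 ≤ k)
    (hj : Fin.castAdd n j ∉ T) :
    (Pi.single j 1 : Fin k → F) ∉ Submodule.span F (Mᵀ '' (T : Set (Fin (k+n)))) := by
  classical
  have hli := liM M hMDS (insert (Fin.castAdd n j) T)
    (by rw [Finset.card_insert_of_notMem hj]; omega)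
  rw [Finset.coe_insert] at hli
  replace hli : LinearIndepOn F (fun l => Mᵀ l) (insert (Fin.castAdd n j) (T : Set (Fin (k+n)))) := hli
  rw [linearIndepOn_insert (by exact_mod_cast hj)] at hli
  rw [single_eq_col M hsys j]
  exact hli.2

lemma mem_span_of_card_k (M : Matrix (Fin k) (Fin (k + n)) F)
    (hMDS : ∀ S : Finset (Fin (k + n)), S.card = k →
      LinearIndependent F (fun l : S => Mᵀ (l : Fin (k + n))))
    (T : Finset (Fin (k + n))) (hT : T.card = k) (v : Fin k → F) :
    v ∈ Submodule.span F (Mᵀ '' (T : Set (Fin (k+n)))) := by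
  have hli := liM M hMDS T hT.le
  have htop : Submodule.span F
      (Set.range (fun l : (T : Set (Fin (k+n))) => Mᵀ l.1)) = ⊤ :=
    hli.span_eq_top_of_card_eq_finrank' (by
      rw [Module.finrank_fintype_fun_eq_card, Fintype.card_fin]
      simpa using hT)
  have hra : Set.range (fun l : (T : Set (Fin (k+n))) => Mᵀ l.1)
      = Mᵀ '' (T : Set (Fin (k+n))) := by
    ext x
    constructor
    · rintro ⟨l, rfl⟩
      exact ⟨l.1, l.2, rfl⟩
    · rintro ⟨l, hl, rfl⟩
      exact ⟨⟨l, hl⟩, rfl⟩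
  rw [← hra, htop]
  trivial

lemma isRecoverySet_of_card (M : Matrix (Fin k) (Fin (k + n)) F)
    (hsys : ∀ j : Fin k, ∀ r : Fin k, M r (Fin.castAdd n j) = if r = j then (1 : F) else 0)
    (hMDS : ∀ S : Finset (Fin (k + n)), S.card = k →
      LinearIndependent F (fun l : S => Mᵀ (l : Fin (k + n))))
    {i : ℕ} (hik : i ≤ k) (j : Fin k) (R : Finset (Fin n)) (hcard : R.card = k)
    (hj : (j : ℕ) < i → ∀ l ∈ R, (l : ℕ) ≠ (j : ℕ)) :
    IsRecoverySet (Gmat M i) j R := by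
  classical
  have hav : ∀ l ∈ R, cmap k i l ≠ Fin.castAdd n j := by
    intro l hl heq
    have hv : (cmap k i l : ℕ) = (j : ℕ) := by rw [heq]; rfl
    rw [cmap_val] at hv
    split_ifs at hv with h
    · exact hj (by omega) l hl hv
    · have := j.isLt; omega
  constructor
  · rw [Gmat_image]
    exact mem_span_of_card_k M hMDS _
      (by rw [Finset.card_image_of_injective _ (cmap_inj hik), hcard]) _
  · intro S hS hmem
    rw [Gmat_image] at hmem
    refine not_mem_span_of_small M hsys hMDS j (S.image (cmap k i)) ?_ ?_ hmem
    · rw [Finset.card_image_of_injective _ (cmap_inj hik)]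
      have := Finset.card_lt_card hS
      omega
    · intro hmem'
      obtain ⟨l, hl, heq⟩ := Finset.mem_image.mp hmem'
      exact hav l (hS.subset hl) heq

lemma isRecoverySet_singleton (M : Matrix (Fin k) (Fin (k + n)) F)
    (hsys : ∀ j : Fin k, ∀ r : Fin k, M r (Fin.castAdd n j) = if r = j then (1 : F) else 0)
    {i : ℕ} (j : Fin k) (hji : (j : ℕ) < i) (p : Fin n) (hp : (p : ℕ) = (j : ℕ)) :
    IsRecoverySet (Gmat M i) j {p} := by
  have hcol : (Gmat M i)ᵀ p = (Pi.single j 1 : Fin k → F) := by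
    rw [Gmat_transpose, single_eq_col M hsys j]
    have hc : cmap k i p = Fin.castAdd n j := by
      refine Fin.ext ?_
      rw [cmap_val, if_pos (by omega), hp]
      rfl
    rw [hc]
  constructor
  · apply Submodule.subset_span
    exact ⟨p, Finset.mem_coe.mpr (Finset.mem_singleton_self p), hcol⟩
  · intro S hS
    rw [Finset.ssubset_singleton_iff.mp hS]
    simp only [Finset.coe_empty, Set.image_empty, Submodule.span_empty, Submodule.mem_bot]
    intro h
    have hsub : (Gmat M i)ᵀ '' (∅ : Set (Fin n)) = ∅ := by
      ext x
      constructor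
      · rintro ⟨l, hl, _⟩
        simp at hl
      · intro hx
        simp at hx
    rw [hsub, Submodule.span_empty, Submodule.mem_bot] at h
    have := congrFun h j
    simp at this

end Aux

section Alloc

variable {F : Type*} [Field F] {k n : ℕ}

lemma zero_mem_SR (G : Matrix (Fin k) (Fin n) F) : (0 : Fin k → ℝ) ∈ ServiceRegion G := by
  refine ⟨fun j => le_refl 0, fun _ _ => 0, fun _ _ => le_refl 0, fun _ _ _ => rfl,
    fun j => by simp, fun l => by simp⟩

lemma convex_SR (G : Matrix (Fin k) (Fin n) F) : Convex ℝ (ServiceRegion G) := by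
  rintro x ⟨hx0, w1, h1a, h1b, h1c, h1d⟩ y ⟨hy0, w2, h2a, h2b, h2c, h2d⟩ a b ha hb hab
  refine ⟨fun j => by
      have := hx0 j; have := hy0 j
      simp only [Pi.add_apply, Pi.smul_apply, smul_eq_mul]
      positivity,
    fun j R => a * w1 j R + b * w2 j R, ?_, ?_, ?_, ?_⟩
  · intro j R
    have := h1a j R; have := h2a j R
    positivity
  · intro j R hR
    dsimp only
    rw [h1b j R hR, h2b j R hR]; ring
  · intro j
    dsimp only
    rw [Finset.sum_add_distrib, ← Finset.mul_sum, ← Finset.mul_sum, h1c j, h2c j]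
    rfl
  · intro l
    dsimp only
    calc ∑ j : Fin k, ∑ R ∈ Finset.univ.filter (fun R : Finset (Fin n) => l ∈ R),
          (a * w1 j R + b * w2 j R)
        = a * (∑ j : Fin k, ∑ R ∈ Finset.univ.filter (fun R : Finset (Fin n) => l ∈ R), w1 j R)
          + b * (∑ j : Fin k, ∑ R ∈ Finset.univ.filter (fun R : Finset (Fin n) => l ∈ R), w2 j R) := by
          simp_rw [Finset.mul_sum, ← Finset.sum_add_distrib]
      _ ≤ a * 1 + b * 1 := by
          gcongr
          · exact h1d l
          · exact h2d l
      _ = 1 := by rw [mul_one, mul_one, hab]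

lemma alloc_add (G : Matrix (Fin k) (Fin n) F) {lam1 lam2 : Fin k → ℝ}
    {w1 w2 : Fin k → Finset (Fin n) → ℝ}
    (h1 : IsValidAllocation G lam1 w1) (h2 : IsValidAllocation G lam2 w2)
    (s : Finset (Fin n))
    (hw1 : ∀ j R, w1 j R ≠ 0 → R ⊆ s)
    (hw2 : ∀ j R, w2 j R ≠ 0 → ∀ l ∈ R, l ∉ s) :
    IsValidAllocation G (lam1 + lam2) (fun j R => w1 j R + w2 j R) := by
  obtain ⟨h1a, h1b, h1c, h1d⟩ := h1
  obtain ⟨h2a, h2b, h2c, h2d⟩ := h2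
  refine ⟨fun j R => add_nonneg (h1a j R) (h2a j R),
    fun j R hR => by dsimp only; rw [h1b j R hR, h2b j R hR, add_zero],
    fun j => by dsimp only; rw [Finset.sum_add_distrib, h1c j, h2c j]; rfl, ?_⟩
  intro l
  dsimp only
  simp_rw [Finset.sum_add_distrib]
  by_cases hl : l ∈ s
  · have hz : ∑ j : Fin k, ∑ R ∈ Finset.univ.filter (fun R : Finset (Fin n) => l ∈ R),
        w2 j R = 0 := by
      apply Finset.sum_eq_zero; intro j _
      apply Finset.sum_eq_zero; intro R hR
      rw [Finset.mem_filter] at hR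
      by_contra hne
      exact hw2 j R hne l hR.2 hl
    rw [hz, add_zero]; exact h1d l
  · have hz : ∑ j : Fin k, ∑ R ∈ Finset.univ.filter (fun R : Finset (Fin n) => l ∈ R),
        w1 j R = 0 := by
      apply Finset.sum_eq_zero; intro j _
      apply Finset.sum_eq_zero; intro R hR
      rw [Finset.mem_filter] at hR
      by_contra hne
      exact hl (hw1 j R hne hR.2)
    rw [hz, zero_add]; exact h2d l

lemma card_filter_pw {α : Type*} [DecidableEq α] (s : Finset α) (l : α) (hl : l ∈ s) (m : ℕ) :
    ((s.powersetCard (m+1)).filter (fun R => l ∈ R)).card = (s.card - 1).choose m := by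
  rw [← Finset.card_erase_of_mem hl, ← Finset.card_powersetCard]
  refine Finset.card_bij' (fun R _ => R.erase l) (fun T _ => insert l T) ?_ ?_ ?_ ?_
  · intro R hR
    rw [Finset.mem_filter, Finset.mem_powersetCard] at hR
    rw [Finset.mem_powersetCard]
    constructor
    · exact Finset.erase_subset_erase l hR.1.1
    · rw [Finset.card_erase_of_mem hR.2, hR.1.2]
      omega
  · intro T hT
    rw [Finset.mem_powersetCard] at hT
    have hlT : l ∉ T := fun h => Finset.notMem_erase l s (hT.1 h)
    rw [Finset.mem_filter, Finset.mem_powersetCard]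
    refine ⟨⟨?_, ?_⟩, Finset.mem_insert_self l T⟩
    · intro x hx
      rcases Finset.mem_insert.mp hx with rfl | hx
      · exact hl
      · exact Finset.mem_of_mem_erase (hT.1 hx)
    · rw [Finset.card_insert_of_notMem hlT, hT.2]
  · intro R hR
    rw [Finset.mem_filter] at hR
    exact Finset.insert_erase hR.2
  · intro T hT
    rw [Finset.mem_powersetCard] at hT
    exact Finset.erase_insert (fun h => Finset.notMem_erase l s (hT.1 h))

end Alloc

section Alloc2

variable {F : Type*} [Field F] {k n : ℕ}

lemma sum_ite_and_collapse {c : ℝ} (j : Fin k) (P : Finset (Fin n) → Prop) [DecidablePred P]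
    (A : Finset (Finset (Fin n))) (j' : Fin k) :
    ∑ R ∈ A, (if j' = j ∧ P R then c else 0)
      = if j' = j then ∑ R ∈ A, (if P R then c else 0) else 0 := by
  split_ifs with h
  · subst h; simp
  · apply Finset.sum_eq_zero; intro R _; rw [if_neg (fun hc => h hc.1)]

lemma uniform_alloc (M : Matrix (Fin k) (Fin (k + n)) F)
    (hsys : ∀ j : Fin k, ∀ r : Fin k, M r (Fin.castAdd n j) = if r = j then (1 : F) else 0)
    (hMDS : ∀ S : Finset (Fin (k + n)), S.card = k →
      LinearIndependent F (fun l : S => Mᵀ (l : Fin (k + n))))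
    {i : ℕ} (hik : i ≤ k) (hk : 1 ≤ k) (j : Fin k) (s : Finset (Fin n))
    (hs : k ≤ s.card)
    (hj : (j : ℕ) < i → ∀ l ∈ s, (l : ℕ) ≠ (j : ℕ)) :
    IsValidAllocation (Gmat M i) (((s.card : ℝ)/(k : ℝ)) • (Pi.single j 1 : Fin k → ℝ))
      (fun j' R => if j' = j ∧ R ∈ s.powersetCard k
        then ((s.card : ℝ)/(k : ℝ))/((s.card).choose k : ℝ) else 0) := by
  classical
  set c : ℝ := ((s.card : ℝ)/(k : ℝ))/((s.card).choose k : ℝ) with hc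
  have hch : (0 : ℝ) < ((s.card).choose k : ℝ) := by
    exact_mod_cast Nat.choose_pos hs
  have hkpos : (0 : ℝ) < (k : ℝ) := by exact_mod_cast hk
  have hcpos : 0 ≤ c := by positivity
  refine ⟨fun j' R => by dsimp only; split_ifs; exacts [hcpos, le_refl 0], ?_, ?_, ?_⟩
  · intro j' R hR
    dsimp only
    rw [if_neg]
    rintro ⟨rfl, hmem⟩
    rw [Finset.mem_powersetCard] at hmem
    exact hR (isRecoverySet_of_card M hsys hMDS hik j' R hmem.2
      (fun hlt l hl => hj hlt l (hmem.1 hl)))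
  · intro j'
    dsimp only
    rw [sum_ite_and_collapse]
    rw [Pi.smul_apply, Pi.single_apply, smul_eq_mul]
    split_ifs with h
    · rw [Finset.sum_ite_mem, Finset.univ_inter, Finset.sum_const,
        Finset.card_powersetCard, nsmul_eq_mul, hc, mul_one]
      field_simp
    · rw [mul_zero]
  · intro l
    dsimp only
    simp_rw [sum_ite_and_collapse]
    rw [Finset.sum_ite_eq' Finset.univ j, if_pos (Finset.mem_univ j)]
    rw [Finset.sum_ite_mem]
    have hfil : Finset.univ.filter (fun R : Finset (Fin n) => l ∈ R) ∩ s.powersetCard k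
        = (s.powersetCard k).filter (fun R => l ∈ R) := by
      ext R; simp [and_comm]
    rw [hfil, Finset.sum_const, nsmul_eq_mul]
    by_cases hls : l ∈ s
    · have hk1 : k - 1 + 1 = k := by omega
      have hcnt := card_filter_pw s l hls (k-1)
      rw [hk1] at hcnt
      have hidq : s.card * (s.card - 1).choose (k-1) = (s.card).choose k * k := by
        have h2 := Nat.add_one_mul_choose_eq (s.card - 1) (k-1)
        rw [hk1] at h2
        rw [(by omega : s.card - 1 + 1 = s.card)] at h2
        exact h2
      have hidr : (s.card : ℝ) * ((s.card - 1).choose (k-1) : ℝ)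
          = ((s.card).choose k : ℝ) * (k : ℝ) := by exact_mod_cast hidq
      rw [hcnt, hc, div_div]
      have heq : (((s.card - 1).choose (k-1) : ℝ)) * ((s.card : ℝ) / ((k : ℝ) * ((s.card).choose k : ℝ))) = 1 := by
        rw [mul_div_assoc']
        rw [div_eq_one_iff_eq (by positivity)]
        nlinarith [hidr]
      exact le_of_eq heq
    · have : (s.powersetCard k).filter (fun R => l ∈ R) = ∅ := by
        rw [Finset.filter_eq_empty_iff]
        intro R hR
        rw [Finset.mem_powersetCard] at hR
        exact fun hcon => hls (hR.1 hcon)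
      rw [this]
      simp

lemma singleton_alloc (M : Matrix (Fin k) (Fin (k + n)) F)
    (hsys : ∀ j : Fin k, ∀ r : Fin k, M r (Fin.castAdd n j) = if r = j then (1 : F) else 0)
    {i : ℕ} (j : Fin k) (hji : (j : ℕ) < i) (p : Fin n) (hp : (p : ℕ) = (j : ℕ)) :
    IsValidAllocation (Gmat M i) (Pi.single j 1 : Fin k → ℝ)
      (fun j' R => if j' = j ∧ R = {p} then 1 else 0) := by
  classical
  refine ⟨fun j' R => by dsimp only; split_ifs; exacts [zero_le_one, le_refl 0], ?_, ?_, ?_⟩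
  · intro j' R hR
    dsimp only
    rw [if_neg]
    rintro ⟨rfl, rfl⟩
    exact hR (isRecoverySet_singleton M hsys j' hji p hp)
  · intro j'
    dsimp only
    rw [sum_ite_and_collapse, Pi.single_apply]
    split_ifs with h
    · rw [Finset.sum_ite_eq' Finset.univ ({p} : Finset (Fin n)), if_pos (Finset.mem_univ _)]
    · rfl
  · intro l
    dsimp only
    simp_rw [sum_ite_and_collapse]
    rw [Finset.sum_ite_eq' Finset.univ j, if_pos (Finset.mem_univ j)]
    rw [Finset.sum_ite_eq' _ ({p} : Finset (Fin n))]
    split_ifs <;> norm_num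

end Alloc2

theorem maximal_achievable_simplex_subset_srr
    {F : Type*} [Field F] [Fintype F] {k n : ℕ} (hk : 2 ≤ k) (hkn : k ≤ n)
    (hq : k + n + 1 ≤ Fintype.card F)
    (M : Matrix (Fin k) (Fin (k + n)) F)
    (hsys : ∀ j : Fin k, ∀ r : Fin k, M r (Fin.castAdd n j) = if r = j then (1 : F) else 0)
    (hMDS : ∀ S : Finset (Fin (k + n)), S.card = k →
      LinearIndependent F (fun l : S => Mᵀ (l : Fin (k + n))))
    (i : ℕ) (hik : i ≤ k) :
    convexHull ℝ (insert (0 : Fin k → ℝ)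
        (Set.range fun j : Fin k =>
          (if (j : ℕ) < i then (if n = k then (1 : ℝ) else 1 + ((n : ℝ) - 1) / (k : ℝ))
           else (n : ℝ) / (k : ℝ)) • (Pi.single j 1 : Fin k → ℝ)))
      ⊆ ServiceRegion (Gmat M i : Matrix (Fin k) (Fin n) F) := by
  classical
  apply convexHull_min ?_ (convex_SR _)
  intro x hx
  have hn2 : 2 ≤ n := le_trans hk hkn
  have hk1 : 1 ≤ k := by omega
  have hsingle : ∀ (j j' : Fin k), (0:ℝ) ≤ (Pi.single j 1 : Fin k → ℝ) j' := by
    intro j j'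
    rw [Pi.single_apply]
    split_ifs <;> norm_num
  rcases Set.mem_insert_iff.mp hx with rfl | ⟨j, rfl⟩
  · exact zero_mem_SR _
  · dsimp only
    by_cases hji : (j : ℕ) < i
    · set p : Fin n := ⟨(j : ℕ), lt_of_lt_of_le j.isLt hkn⟩ with hpdef
      have hpv : (p : ℕ) = (j : ℕ) := rfl
      by_cases hnk : n = k
      · rw [if_pos hji, if_pos hnk, one_smul]
        exact ⟨hsingle j, _, singleton_alloc M hsys j hji p hpv⟩
      · rw [if_pos hji, if_neg hnk]
        set s : Finset (Fin n) := Finset.univ.erase p with hsdef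
        have hscard : s.card = n - 1 := by
          rw [hsdef, Finset.card_erase_of_mem (Finset.mem_univ p), Finset.card_fin]
        have hscardR : ((s.card : ℕ) : ℝ) = (n : ℝ) - 1 := by
          rw [hscard]
          push_cast [Nat.cast_sub (by omega : 1 ≤ n)]
          ring
        have halloc1 := uniform_alloc M hsys hMDS hik hk1 j s
          (by rw [hscard]; omega)
          (fun _ l hl hlj => (Finset.ne_of_mem_erase hl) (Fin.ext (hlj.trans hpv.symm)))
        have halloc2 := singleton_alloc M hsys j hji p hpv
        have hcomb := alloc_add (Gmat M i) halloc1 halloc2 s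
          (by
            intro j' R hne
            have hcond : j' = j ∧ R ∈ s.powersetCard k := by
              by_contra hcon
              exact hne (if_neg hcon)
            exact (Finset.mem_powersetCard.mp hcond.2).1)
          (by
            intro j' R hne l hl hls
            have hcond : j' = j ∧ R = {p} := by
              by_contra hcon
              exact hne (if_neg hcon)
            rw [hcond.2, Finset.mem_singleton] at hl
            rw [hl, hsdef] at hls
            exact Finset.notMem_erase p Finset.univ hls)
        have hlam : ((s.card : ℝ)/(k : ℝ)) • (Pi.single j 1 : Fin k → ℝ) + Pi.single j 1
            = (1 + ((n : ℝ) - 1) / (k : ℝ)) • (Pi.single j 1 : Fin k → ℝ) := by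
          funext j'
          simp only [Pi.add_apply, Pi.smul_apply, smul_eq_mul]
          rw [hscardR]
          ring
        rw [← hlam]
        refine ⟨?_, _, hcomb⟩
        intro j'
        rw [Pi.add_apply, Pi.smul_apply, smul_eq_mul]
        have := hsingle j j'
        have hd : (0:ℝ) ≤ (s.card : ℝ)/(k : ℝ) := by positivity
        nlinarith
    · rw [if_neg hji]
      have halloc := uniform_alloc M hsys hMDS hik hk1 j Finset.univ
        (by rw [Finset.card_fin]; exact hkn)
        (fun hlt => absurd hlt hji)
      rw [Finset.card_fin] at halloc
      refine ⟨?_, _, halloc⟩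
      intro j'
      rw [Pi.smul_apply, smul_eq_mul]
      have := hsingle j j'
      have hd : (0:ℝ) ≤ (n : ℝ)/(k : ℝ) := by positivity
      nlinarith
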